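/- Let a > 0 and let f : ℝ → ℂ be a Schwartz function. Then for every z ∈ ℂ, [B_{a/2}( a·x·f′(x) )](z) = (B_{a/2}f)″(z) − (a²z²/4)·(B_{a/2}f)(z) − (a/2)·(B_{a/2}f)(z); that is, the Bargmann transform intertwines the real Euler operator e_x^a = a·x·∂/∂x with the complex harmonic oscillator H_z^a = ∂²/∂z² − a²z²/4 − a/2. -/

import Mathlib

open Complex Real SchwartzMap

/-- The (parametrized) Bargmann transform `B_{a/2}`:
`(B_{a/2}f)(z) = (a/π)^{1/4} ∫_ℝ f(x) e^{axz − (a/2)x² − (a/4)z²} dx`. -/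
noncomputable def bargmann (a : ℝ) (f : ℝ → ℂ) (z : ℂ) : ℂ :=
  ((a / Real.pi) ^ ((1 : ℝ) / 4) : ℝ) *
    ∫ x : ℝ, f x * Complex.exp (a * x * z - (a / 2) * x ^ 2 - (a / 4) * z ^ 2)

section BargmannAux

open MeasureTheory Filter Topology

/-- The Bargmann kernel. -/
noncomputable def bker (a : ℝ) (x : ℝ) (z : ℂ) : ℂ :=
  Complex.exp ((a:ℂ) * x * z - (a / 2) * x ^ 2 - (a / 4) * z ^ 2)

lemma bargmann_eq_bker (a : ℝ) (f : ℝ → ℂ) (z : ℂ) :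
    bargmann a f z = ((a / Real.pi) ^ ((1 : ℝ) / 4) : ℝ) * ∫ x : ℝ, f x * bker a x z := rfl

lemma bker_continuous (a : ℝ) (z : ℂ) : Continuous fun x : ℝ => bker a x z := by
  unfold bker; fun_prop

lemma bker_norm (a x : ℝ) (z : ℂ) :
    ‖bker a x z‖ = Real.exp (a * x * z.re - a / 2 * x ^ 2 - a / 4 * (z ^ 2).re) := by
  rw [bker, Complex.norm_exp]
  norm_num [Complex.sub_re, Complex.mul_re, Complex.ofReal_re, Complex.ofReal_im,
    ← Complex.ofReal_pow]

lemma bker_norm_le (a : ℝ) (ha : 0 ≤ a) (x : ℝ) {z : ℂ} {R : ℝ} (hz : ‖z‖ ≤ R) :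
    ‖bker a x z‖ ≤ Real.exp (a * R * |x| + a / 4 * R ^ 2 - a / 2 * x ^ 2) := by
  rw [bker_norm]
  apply Real.exp_le_exp.2
  have h1 : a * x * z.re ≤ a * R * |x| := by
    have : x * z.re ≤ |x| * R := by
      calc x * z.re ≤ |x * z.re| := le_abs_self _
      _ = |x| * |z.re| := abs_mul _ _
      _ ≤ |x| * R := by
          apply mul_le_mul_of_nonneg_left _ (abs_nonneg x)
          exact (Complex.abs_re_le_norm z).trans hz
    nlinarith
  have h2 : -(z ^ 2).re ≤ R ^ 2 := by
    have := (Complex.abs_re_le_norm (z ^ 2))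
    have h3 : ‖z ^ 2‖ ≤ R ^ 2 := by
      rw [norm_pow]
      exact pow_le_pow_left₀ (norm_nonneg z) hz 2
    cases' abs_le.1 (this.trans h3) with h4 h5
    linarith
  nlinarith

lemma norm_mul_bker_le (a : ℝ) (ha : 0 ≤ a) {z : ℂ} {R : ℝ} (hz : ‖z‖ ≤ R) (x : ℝ)
    (u : ℂ) (M : ℝ) (n : ℕ) (hu : ‖u‖ ≤ M * (|x| + 1) ^ n) :
    ‖u * bker a x z‖ ≤
      (M * Real.exp (a / 4 * R ^ 2)) * ((|x| + 1) ^ n * Real.exp (a * R * |x| - a / 2 * x ^ 2)) := by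
  rw [norm_mul]
  have hK : ‖bker a x z‖ ≤ Real.exp (a / 4 * R ^ 2) * Real.exp (a * R * |x| - a / 2 * x ^ 2) := by
    rw [← Real.exp_add]
    have := bker_norm_le a ha x hz
    convert this using 2
    ring
  calc ‖u‖ * ‖bker a x z‖
      ≤ (M * (|x| + 1) ^ n) * (Real.exp (a / 4 * R ^ 2) * Real.exp (a * R * |x| - a / 2 * x ^ 2)) :=
        mul_le_mul hu hK (norm_nonneg _) ((norm_nonneg u).trans hu)
    _ = (M * Real.exp (a / 4 * R ^ 2)) * ((|x| + 1) ^ n * Real.exp (a * R * |x| - a / 2 * x ^ 2)) := by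
        ring

lemma poly_exp_le (a : ℝ) (ha : 0 < a) (c : ℝ) (n : ℕ) :
    ∃ C : ℝ, 0 ≤ C ∧ ∀ x : ℝ, (|x| + 1) ^ n * Real.exp (c * |x| - a / 2 * x ^ 2)
      ≤ C * Real.exp (-(a / 4) * x ^ 2) := by
  refine ⟨Real.exp ((|c| + n) ^ 2 / a), (Real.exp_pos _).le, fun x => ?_⟩
  have h1 : (|x| + 1) ^ n ≤ Real.exp (n * |x|) := by
    calc (|x| + 1) ^ n ≤ (Real.exp |x|) ^ n := by
          apply pow_le_pow_left₀ (by positivity)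
          linarith [Real.add_one_le_exp (|x|)]
      _ = Real.exp (n * |x|) := by rw [← Real.exp_nat_mul]
  have h2 : c * |x| ≤ |c| * |x| :=
    mul_le_mul_of_nonneg_right (le_abs_self c) (abs_nonneg x)
  have key : (|c| + n) * |x| ≤ a / 4 * x ^ 2 + (|c| + n) ^ 2 / a := by
    have hd : (0:ℝ) ≤ |c| + n := by positivity
    have hdd : (|c| + (n:ℝ)) ^ 2 / a * a = (|c| + (n:ℝ)) ^ 2 := div_mul_cancel₀ _ ha.ne'
    nlinarith [sq_nonneg (a / 2 * |x| - (|c| + (n:ℝ))), _root_.sq_abs x, mul_pos ha ha]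
  calc (|x| + 1) ^ n * Real.exp (c * |x| - a / 2 * x ^ 2)
      ≤ Real.exp (n * |x|) * Real.exp (|c| * |x| - a / 2 * x ^ 2) := by
        apply mul_le_mul h1 (Real.exp_le_exp.2 (by linarith)) (Real.exp_pos _).le (Real.exp_pos _).le
    _ = Real.exp ((|c| + n) * |x| - a / 2 * x ^ 2) := by rw [← Real.exp_add]; ring_nf
    _ ≤ Real.exp ((|c| + n) ^ 2 / a) * Real.exp (-(a / 4) * x ^ 2) := by
        rw [← Real.exp_add]; apply Real.exp_le_exp.2; nlinarith [key]

lemma integrable_poly_gauss (a : ℝ) (ha : 0 < a) (M c : ℝ) (n : ℕ) :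
    Integrable (fun x : ℝ => M * ((|x| + 1) ^ n * Real.exp (c * |x| - a / 2 * x ^ 2))) := by
  apply Integrable.const_mul
  obtain ⟨C, hC0, hC⟩ := poly_exp_le a ha c n
  apply Integrable.mono' (g := fun x : ℝ => C * Real.exp (-(a / 4) * x ^ 2))
  · exact (integrable_exp_neg_mul_sq (by positivity)).const_mul _
  · apply Continuous.aestronglyMeasurable; fun_prop
  · filter_upwards with x
    have h0 : (0:ℝ) ≤ (|x| + 1) ^ n * Real.exp (c * |x| - a / 2 * x ^ 2) := by positivity
    rw [Real.norm_eq_abs, _root_.abs_of_nonneg h0]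
    exact hC x

lemma integrable_mul_bker (a : ℝ) (ha : 0 < a) {z : ℂ} {R : ℝ} (hz : ‖z‖ ≤ R)
    (g : ℝ → ℂ) (hg : Continuous g) (M : ℝ) (n : ℕ) (hgb : ∀ x, ‖g x‖ ≤ M * (|x| + 1) ^ n) :
    Integrable (fun x : ℝ => g x * bker a x z) := by
  apply Integrable.mono'
    (g := fun x : ℝ => (M * Real.exp (a / 4 * R ^ 2)) *
      ((|x| + 1) ^ n * Real.exp (a * R * |x| - a / 2 * x ^ 2)))
  · exact integrable_poly_gauss a ha _ _ n
  · exact (hg.mul (bker_continuous a z)).aestronglyMeasurable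
  · filter_upwards with x
    exact norm_mul_bker_le a ha.le hz x (g x) M n (hgb x)

lemma tendsto_gauss_zero (a : ℝ) (ha : 0 < a) :
    Tendsto (fun x : ℝ => Real.exp (-(a / 4) * x ^ 2)) atTop (𝓝 0) ∧
      Tendsto (fun x : ℝ => Real.exp (-(a / 4) * x ^ 2)) atBot (𝓝 0) := by
  constructor
  · apply Real.tendsto_exp_atBot.comp
    exact (tendsto_pow_atTop two_ne_zero).const_mul_atTop_of_neg (by linarith)
  · apply Real.tendsto_exp_atBot.comp
    have h2 : Tendsto (fun x : ℝ => x ^ 2) atBot atTop := by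
      have h1 : Tendsto (fun x : ℝ => x ^ 2) atTop atTop := tendsto_pow_atTop two_ne_zero
      exact (h1.comp tendsto_abs_atBot_atTop).congr fun x => _root_.sq_abs x
    exact h2.const_mul_atTop_of_neg (by linarith)

lemma tendsto_bound_zero (a : ℝ) (ha : 0 < a) (h : ℝ → ℂ) (M c : ℝ) (n : ℕ)
    (hb : ∀ x, ‖h x‖ ≤ M * ((|x| + 1) ^ n * Real.exp (c * |x| - a / 2 * x ^ 2))) :
    Tendsto h atTop (𝓝 0) ∧ Tendsto h atBot (𝓝 0) := by
  obtain ⟨C, hC0, hC⟩ := poly_exp_le a ha c n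
  have hM : 0 ≤ M := by
    by_contra hM
    push_neg at hM
    have h1 := (norm_nonneg (h 0)).trans (hb 0)
    have h2 : (0:ℝ) < (|(0:ℝ)| + 1) ^ n * Real.exp (c * |(0:ℝ)| - a / 2 * (0:ℝ) ^ 2) := by
      positivity
    nlinarith
  have hbb : ∀ x, ‖h x‖ ≤ M * C * Real.exp (-(a / 4) * x ^ 2) := fun x =>
    (hb x).trans (by
      have := mul_le_mul_of_nonneg_left (hC x) hM
      linarith [this])
  obtain ⟨ht, hb'⟩ := tendsto_gauss_zero a ha
  constructor
  · apply squeeze_zero_norm hbb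
    simpa using ht.const_mul (M * C)
  · apply squeeze_zero_norm hbb
    simpa using hb'.const_mul (M * C)

lemma bker_hasDerivAt (a x : ℝ) (z : ℂ) :
    HasDerivAt (fun w => bker a x w) (((a:ℂ) * x - a / 2 * z) * bker a x z) z := by
  have h1 : HasDerivAt (fun w : ℂ => (a:ℂ) * x * w - (a / 2) * x ^ 2 - (a / 4) * w ^ 2)
      ((a:ℂ) * x - a / 2 * z) z := by
    have hA : HasDerivAt (fun w : ℂ => (a:ℂ) * x * w) ((a:ℂ) * x) z := by
      simpa using (hasDerivAt_id z).const_mul ((a:ℂ) * x)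
    have hB : HasDerivAt (fun w : ℂ => ((a:ℂ) / 4) * w ^ 2) ((a:ℂ) / 4 * (2 * z)) z := by
      simpa using ((hasDerivAt_pow 2 z).const_mul ((a:ℂ) / 4))
    have := (hA.sub_const ((a:ℂ) / 2 * x ^ 2)).sub hB
    refine this.congr_deriv ?_
    ring
  simpa [bker, mul_comm] using h1.cexp

lemma bkerx_hasDerivAt (a : ℝ) (z : ℂ) (x : ℝ) :
    HasDerivAt (fun y : ℝ => (a:ℂ) * y * bker a y z)
      ((a:ℂ) * bker a x z + (a:ℂ) * x * (((a:ℂ) * z - a * x) * bker a x z)) x := by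
  have key : ∀ w : ℂ, HasDerivAt
      (fun w : ℂ => (a:ℂ) * w * Complex.exp ((a:ℂ) * w * z - (a / 2) * w ^ 2 - (a / 4) * z ^ 2))
      ((a:ℂ) * Complex.exp ((a:ℂ) * w * z - (a / 2) * w ^ 2 - (a / 4) * z ^ 2)
        + (a:ℂ) * w * (((a:ℂ) * z - a * w) *
          Complex.exp ((a:ℂ) * w * z - (a / 2) * w ^ 2 - (a / 4) * z ^ 2))) w := by
    intro w
    have h1 : HasDerivAt (fun w : ℂ => (a:ℂ) * w) (a:ℂ) w := by
      simpa using (hasDerivAt_id w).const_mul (a:ℂ)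
    have h2 : HasDerivAt (fun w : ℂ => (a:ℂ) * w * z - (a / 2) * w ^ 2 - (a / 4) * z ^ 2)
        ((a:ℂ) * z - a * w) w := by
      have hA : HasDerivAt (fun w : ℂ => (a:ℂ) * w * z) ((a:ℂ) * z) w := by
        have := (hasDerivAt_id w).const_mul ((a:ℂ) * z)
        simpa [mul_comm, mul_assoc, mul_left_comm] using this
      have hB : HasDerivAt (fun w : ℂ => ((a:ℂ) / 2) * w ^ 2) ((a:ℂ) / 2 * (2 * w)) w := by
        simpa using ((hasDerivAt_pow 2 w).const_mul ((a:ℂ) / 2))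
      have := (hA.sub hB).sub_const ((a:ℂ) / 4 * z ^ 2)
      refine this.congr_deriv ?_
      ring
    have := h1.mul h2.cexp
    refine this.congr_deriv ?_
    ring
  have := (key (x:ℂ)).comp_ofReal
  simpa [bker] using this

lemma schwartz_hasDerivAt (f : SchwartzMap ℝ ℂ) (x : ℝ) :
    HasDerivAt (fun y : ℝ => f y) (deriv (fun y : ℝ => f y) x) x :=
  (f.differentiable.differentiableAt).hasDerivAt


lemma schwartz_bound (f : SchwartzMap ℝ ℂ) : ∃ M : ℝ, 0 ≤ M ∧ ∀ x, ‖f x‖ ≤ M := by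
  obtain ⟨C, hC⟩ := f.decay 0 0
  exact ⟨C, hC.1.le, fun x => by simpa using hC.2 x⟩

lemma norm_lin_le (a : ℝ) (ha : 0 < a) {w : ℂ} {R : ℝ} (hw : ‖w‖ ≤ R) (x : ℝ) :
    ‖(a:ℂ) * x - (a:ℂ) / 2 * w‖ ≤ (a + a * R / 2) * (|x| + 1) := by
  have hR : (0:ℝ) ≤ R := (norm_nonneg w).trans hw
  have h1 : ‖(a:ℂ) * x - (a:ℂ) / 2 * w‖ ≤ ‖(a:ℂ) * (x:ℂ)‖ + ‖((a:ℂ) / 2) * w‖ :=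
    norm_sub_le _ _
  have e1 : ‖(a:ℂ) * (x:ℂ)‖ = a * |x| := by
    rw [norm_mul, Complex.norm_real, Complex.norm_real, Real.norm_eq_abs, Real.norm_eq_abs,
      abs_of_pos ha]
  have e2 : ‖((a:ℂ) / 2) * w‖ = a / 2 * ‖w‖ := by
    rw [norm_mul, norm_div, Complex.norm_real, Real.norm_eq_abs, abs_of_pos ha]
    norm_num
  rw [e1, e2] at h1
  have h2 : a / 2 * ‖w‖ ≤ a / 2 * R := mul_le_mul_of_nonneg_left hw (by positivity)
  have h3 : (0:ℝ) ≤ a * R * |x| := by positivity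
  linarith

lemma hasDerivAt_bargmann_int (a : ℝ) (ha : 0 < a) (f : SchwartzMap ℝ ℂ) (z : ℂ) :
    HasDerivAt (fun w => ∫ x : ℝ, f x * bker a x w)
      (∫ x : ℝ, (f x * ((a:ℂ) * x - (a:ℂ) / 2 * z)) * bker a x z) z := by
  obtain ⟨Mf, hMf0, hMf⟩ := schwartz_bound f
  set R : ℝ := ‖z‖ + 1 with hR
  have hzR : ‖z‖ ≤ R := by simp [hR]
  have hRpos : (0:ℝ) ≤ R := by positivity
  have key := hasDerivAt_integral_of_dominated_loc_of_deriv_le (μ := (volume : MeasureTheory.Measure ℝ))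
    (F := fun w (x : ℝ) => f x * bker a x w)
    (F' := fun w (x : ℝ) => (f x * ((a:ℂ) * x - (a:ℂ) / 2 * w)) * bker a x w)
    (x₀ := z)
    (bound := fun x : ℝ => (Mf * (a + a * R / 2) * Real.exp (a / 4 * R ^ 2)) *
      ((|x| + 1) ^ 1 * Real.exp (a * R * |x| - a / 2 * x ^ 2)))
    (Metric.ball_mem_nhds z one_pos)
    (Filter.Eventually.of_forall fun w =>
      (f.continuous.mul (bker_continuous a w)).aestronglyMeasurable)
    (integrable_mul_bker a ha hzR _ f.continuous Mf 0 (fun x => by simpa using hMf x))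
    (((f.continuous.mul (by fun_prop)).mul (bker_continuous a z)).aestronglyMeasurable)
    (Filter.Eventually.of_forall fun x => ?_)
    (integrable_poly_gauss a ha _ _ 1)
    (Filter.Eventually.of_forall fun x => ?_)
  · exact key.2
  · intro w hw
    have hwR : ‖w‖ ≤ R := by
      have : dist w z < 1 := Metric.mem_ball.1 hw
      calc ‖w‖ = ‖z + (w - z)‖ := by ring_nf
        _ ≤ ‖z‖ + ‖w - z‖ := norm_add_le _ _
        _ ≤ ‖z‖ + 1 := by
            rw [← dist_eq_norm]
            linarith [this]
    apply norm_mul_bker_le a ha.le hwR x _ (Mf * (a + a * R / 2)) 1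
    rw [norm_mul, pow_one]
    have := norm_lin_le a ha hwR x
    have h0 : (0:ℝ) ≤ (a + a * R / 2) * (|x| + 1) := by positivity
    calc ‖f x‖ * ‖(a:ℂ) * x - (a:ℂ) / 2 * w‖ ≤ Mf * ((a + a * R / 2) * (|x| + 1)) :=
          mul_le_mul (hMf x) this (norm_nonneg _) hMf0
      _ = Mf * (a + a * R / 2) * (|x| + 1) := by ring
  · intro w _
    simpa [mul_assoc] using (bker_hasDerivAt a x w).const_mul (f x)

lemma hasDerivAt_bargmann_int2 (a : ℝ) (ha : 0 < a) (f : SchwartzMap ℝ ℂ) (z : ℂ) :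
    HasDerivAt (fun w => ∫ x : ℝ, (f x * ((a:ℂ) * x - (a:ℂ) / 2 * w)) * bker a x w)
      (∫ x : ℝ, (f x * (((a:ℂ) * x - (a:ℂ) / 2 * z) ^ 2 - (a:ℂ) / 2)) * bker a x z) z := by
  obtain ⟨Mf, hMf0, hMf⟩ := schwartz_bound f
  set R : ℝ := ‖z‖ + 1 with hR
  have hzR : ‖z‖ ≤ R := by simp [hR]
  have hRpos : (0:ℝ) ≤ R := by positivity
  have key := hasDerivAt_integral_of_dominated_loc_of_deriv_le (μ := (volume : MeasureTheory.Measure ℝ))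
    (F := fun w (x : ℝ) => (f x * ((a:ℂ) * x - (a:ℂ) / 2 * w)) * bker a x w)
    (F' := fun w (x : ℝ) => (f x * (((a:ℂ) * x - (a:ℂ) / 2 * w) ^ 2 - (a:ℂ) / 2)) * bker a x w)
    (x₀ := z)
    (bound := fun x : ℝ => (Mf * ((a + a * R / 2) ^ 2 + a / 2) * Real.exp (a / 4 * R ^ 2)) *
      ((|x| + 1) ^ 2 * Real.exp (a * R * |x| - a / 2 * x ^ 2)))
    (Metric.ball_mem_nhds z one_pos)
    (Filter.Eventually.of_forall fun w =>
      ((f.continuous.mul (by fun_prop)).mul (bker_continuous a w)).aestronglyMeasurable)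
    (integrable_mul_bker a ha hzR _ (f.continuous.mul (by fun_prop)) (Mf * (a + a * R / 2)) 1
      (fun x => by
        rw [norm_mul, pow_one]
        have := norm_lin_le a ha hzR x
        calc ‖f x‖ * ‖(a:ℂ) * x - (a:ℂ) / 2 * z‖ ≤ Mf * ((a + a * R / 2) * (|x| + 1)) :=
              mul_le_mul (hMf x) this (norm_nonneg _) hMf0
          _ = Mf * (a + a * R / 2) * (|x| + 1) := by ring))
    (((f.continuous.mul (by fun_prop)).mul (bker_continuous a z)).aestronglyMeasurable)
    (Filter.Eventually.of_forall fun x => ?_)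
    (integrable_poly_gauss a ha _ _ 2)
    (Filter.Eventually.of_forall fun x => ?_)
  · exact key.2
  · intro w hw
    have hwR : ‖w‖ ≤ R := by
      have : dist w z < 1 := Metric.mem_ball.1 hw
      calc ‖w‖ = ‖z + (w - z)‖ := by ring_nf
        _ ≤ ‖z‖ + ‖w - z‖ := norm_add_le _ _
        _ ≤ ‖z‖ + 1 := by
            rw [← dist_eq_norm]
            linarith [this]
    apply norm_mul_bker_le a ha.le hwR x _ (Mf * ((a + a * R / 2) ^ 2 + a / 2)) 2
    rw [norm_mul]
    have hlin := norm_lin_le a ha hwR x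
    have hsq : ‖((a:ℂ) * x - (a:ℂ) / 2 * w) ^ 2 - (a:ℂ) / 2‖ ≤
        ((a + a * R / 2) ^ 2 + a / 2) * (|x| + 1) ^ 2 := by
      have h1 : ‖((a:ℂ) * x - (a:ℂ) / 2 * w) ^ 2 - (a:ℂ) / 2‖ ≤
          ‖((a:ℂ) * x - (a:ℂ) / 2 * w) ^ 2‖ + ‖((a:ℂ) / 2 : ℂ)‖ := norm_sub_le _ _
      have h2 : ‖((a:ℂ) * x - (a:ℂ) / 2 * w) ^ 2‖ = ‖(a:ℂ) * x - (a:ℂ) / 2 * w‖ ^ 2 :=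
        norm_pow _ 2
      have h3 : ‖((a:ℂ) / 2 : ℂ)‖ = a / 2 := by
        rw [norm_div, Complex.norm_real, Real.norm_eq_abs, abs_of_pos ha]
        norm_num
      have h4 : ‖(a:ℂ) * x - (a:ℂ) / 2 * w‖ ^ 2 ≤ ((a + a * R / 2) * (|x| + 1)) ^ 2 := by
        apply pow_le_pow_left₀ (norm_nonneg _) hlin
      have h5 : (1:ℝ) ≤ (|x| + 1) ^ 2 := by nlinarith [abs_nonneg x]
      rw [h2, h3] at h1
      nlinarith [h1, h4, h5, ha.le, sq_nonneg (a + a * R / 2)]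
    calc ‖f x‖ * ‖((a:ℂ) * x - (a:ℂ) / 2 * w) ^ 2 - (a:ℂ) / 2‖ ≤
          Mf * (((a + a * R / 2) ^ 2 + a / 2) * (|x| + 1) ^ 2) :=
        mul_le_mul (hMf x) hsq (norm_nonneg _) hMf0
      _ = Mf * ((a + a * R / 2) ^ 2 + a / 2) * (|x| + 1) ^ 2 := by ring
  · intro w _
    have hq : HasDerivAt (fun w : ℂ => (a:ℂ) * x - (a:ℂ) / 2 * w) (-((a:ℂ) / 2)) w := by
      simpa using ((hasDerivAt_id w).const_mul ((a:ℂ) / 2)).const_sub ((a:ℂ) * x)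
    have := (hq.mul (bker_hasDerivAt a x w)).const_mul (f x)
    simp only [mul_assoc]
    refine this.congr_deriv ?_
    ring


lemma norm_coe_a (a : ℝ) (ha : 0 < a) : ‖(a:ℂ)‖ = a := by
  rw [Complex.norm_real, Real.norm_eq_abs, abs_of_pos ha]

lemma norm_ax (a : ℝ) (ha : 0 < a) (x : ℝ) : ‖(a:ℂ) * (x:ℂ)‖ = a * |x| := by
  rw [norm_mul, Complex.norm_real, Complex.norm_real, Real.norm_eq_abs, Real.norm_eq_abs,
    abs_of_pos ha]

lemma norm_az (a : ℝ) (ha : 0 < a) (z : ℂ) : ‖(a:ℂ) * z‖ = a * ‖z‖ := by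
  rw [norm_mul, norm_coe_a a ha]

lemma norm_quad_le (a : ℝ) (ha : 0 < a) (z : ℂ) (x : ℝ) :
    ‖(a:ℂ) ^ 2 * x ^ 2 - (a:ℂ) ^ 2 * x * z - (a:ℂ)‖
      ≤ (a ^ 2 + a ^ 2 * ‖z‖ + a) * (|x| + 1) ^ 2 := by
  have h1 : ‖(a:ℂ) ^ 2 * x ^ 2 - (a:ℂ) ^ 2 * x * z - (a:ℂ)‖
      ≤ ‖(a:ℂ) ^ 2 * (x:ℂ) ^ 2‖ + ‖(a:ℂ) ^ 2 * (x:ℂ) * z‖ + ‖(a:ℂ)‖ := by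
    calc ‖(a:ℂ) ^ 2 * x ^ 2 - (a:ℂ) ^ 2 * x * z - (a:ℂ)‖
        ≤ ‖(a:ℂ) ^ 2 * x ^ 2 - (a:ℂ) ^ 2 * x * z‖ + ‖(a:ℂ)‖ := norm_sub_le _ _
      _ ≤ ‖(a:ℂ) ^ 2 * (x:ℂ) ^ 2‖ + ‖(a:ℂ) ^ 2 * (x:ℂ) * z‖ + ‖(a:ℂ)‖ := by
          linarith [norm_sub_le ((a:ℂ) ^ 2 * (x:ℂ) ^ 2) ((a:ℂ) ^ 2 * (x:ℂ) * z)]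
  have e1 : ‖(a:ℂ) ^ 2 * (x:ℂ) ^ 2‖ = a ^ 2 * x ^ 2 := by
    rw [norm_mul, norm_pow, norm_pow, Complex.norm_real, Complex.norm_real,
      Real.norm_eq_abs, Real.norm_eq_abs, abs_of_pos ha, _root_.sq_abs]
  have e2 : ‖(a:ℂ) ^ 2 * (x:ℂ) * z‖ = a ^ 2 * |x| * ‖z‖ := by
    rw [norm_mul, norm_mul, norm_pow, Complex.norm_real, Complex.norm_real,
      Real.norm_eq_abs, Real.norm_eq_abs, abs_of_pos ha]
  have e3 : ‖(a:ℂ)‖ = a := norm_coe_a a ha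
  rw [e1, e2, e3] at h1
  have h5 : x ^ 2 ≤ (|x| + 1) ^ 2 := by nlinarith [abs_nonneg x, _root_.sq_abs x]
  have h6 : |x| ≤ (|x| + 1) ^ 2 := by nlinarith [abs_nonneg x]
  have h7 : (1:ℝ) ≤ (|x| + 1) ^ 2 := by nlinarith [abs_nonneg x]
  nlinarith [mul_le_mul_of_nonneg_left h5 (sq_nonneg a),
    mul_le_mul_of_nonneg_left h6 (mul_nonneg (sq_nonneg a) (norm_nonneg z)),
    mul_le_mul_of_nonneg_left h7 ha.le]

lemma norm_t2_le (a : ℝ) (ha : 0 < a) (z : ℂ) (x : ℝ) :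
    ‖(a:ℂ) + (a:ℂ) * x * ((a:ℂ) * z - (a:ℂ) * x)‖
      ≤ (a + a ^ 2 * ‖z‖ + a ^ 2) * (|x| + 1) ^ 2 := by
  have h1 : ‖(a:ℂ) + (a:ℂ) * x * ((a:ℂ) * z - (a:ℂ) * x)‖
      ≤ ‖(a:ℂ)‖ + ‖(a:ℂ) * (x:ℂ)‖ * ‖(a:ℂ) * z - (a:ℂ) * (x:ℂ)‖ := by
    calc ‖(a:ℂ) + (a:ℂ) * x * ((a:ℂ) * z - (a:ℂ) * x)‖
        ≤ ‖(a:ℂ)‖ + ‖(a:ℂ) * x * ((a:ℂ) * z - (a:ℂ) * x)‖ := norm_add_le _ _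
      _ = ‖(a:ℂ)‖ + ‖(a:ℂ) * (x:ℂ)‖ * ‖(a:ℂ) * z - (a:ℂ) * (x:ℂ)‖ := by rw [norm_mul]
  have h2 : ‖(a:ℂ) * z - (a:ℂ) * (x:ℂ)‖ ≤ a * ‖z‖ + a * |x| := by
    calc ‖(a:ℂ) * z - (a:ℂ) * (x:ℂ)‖ ≤ ‖(a:ℂ) * z‖ + ‖(a:ℂ) * (x:ℂ)‖ := norm_sub_le _ _
      _ = a * ‖z‖ + a * |x| := by rw [norm_az a ha, norm_ax a ha]
  rw [norm_coe_a a ha, norm_ax a ha] at h1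
  have h3 : a * |x| * ‖(a:ℂ) * z - (a:ℂ) * (x:ℂ)‖ ≤ a * |x| * (a * ‖z‖ + a * |x|) :=
    mul_le_mul_of_nonneg_left h2 (by positivity)
  have h7 : (1:ℝ) ≤ (|x| + 1) ^ 2 := by nlinarith [abs_nonneg x]
  nlinarith [abs_nonneg x, norm_nonneg z, mul_le_mul_of_nonneg_left h7 ha.le,
    mul_nonneg (mul_nonneg (sq_nonneg a) (norm_nonneg z)) (abs_nonneg x),
    mul_nonneg (mul_nonneg (sq_nonneg a) (norm_nonneg z)) (sq_nonneg x),
    mul_le_mul_of_nonneg_left h7 (mul_nonneg (sq_nonneg a) (norm_nonneg z)),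
    mul_nonneg (sq_nonneg a) (sq_nonneg (|x| - 1))]

lemma bargmann_ibp (a : ℝ) (ha : 0 < a) (f : SchwartzMap ℝ ℂ) (z : ℂ) :
    ∫ x : ℝ, ((a:ℂ) * x * deriv (fun y : ℝ => f y) x) * bker a x z
      = ∫ x : ℝ, (f x * ((a:ℂ) ^ 2 * x ^ 2 - (a:ℂ) ^ 2 * x * z - (a:ℂ))) * bker a x z := by
  obtain ⟨Mf, hMf0, hMf⟩ := schwartz_bound f
  obtain ⟨Mg, hMg0, hMg⟩ := schwartz_bound (SchwartzMap.derivCLM ℝ ℂ f)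
  have hMg' : ∀ x, ‖deriv (fun y : ℝ => f y) x‖ ≤ Mg := fun x => by
    simpa [SchwartzMap.derivCLM_apply] using hMg x
  have hgcont : Continuous fun x : ℝ => deriv (fun y : ℝ => f y) x :=
    (SchwartzMap.derivCLM ℝ ℂ f).continuous.congr fun x => by
      simp [SchwartzMap.derivCLM_apply]
  set h : ℝ → ℂ := fun x => f x * ((a:ℂ) * x * bker a x z) with hdef
  set T1 : ℝ → ℂ := fun x => (deriv (fun y : ℝ => f y) x * ((a:ℂ) * x)) * bker a x z with hT1
  set T2 : ℝ → ℂ := fun x => (f x * ((a:ℂ) + (a:ℂ) * x * ((a:ℂ) * z - (a:ℂ) * x))) * bker a x z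
    with hT2
  have hh : ∀ x, HasDerivAt h (T1 x + T2 x) x := by
    intro x
    have := (schwartz_hasDerivAt f x).mul (bkerx_hasDerivAt a z x)
    refine this.congr_deriv ?_
    simp only [hT1, hT2]
    ring
  have hT1int : Integrable T1 :=
    integrable_mul_bker a ha (le_refl ‖z‖) _ (hgcont.mul (by fun_prop)) (Mg * a) 1
      (fun x => by
        rw [norm_mul, pow_one, norm_ax a ha]
        have h0 : ‖deriv (fun y : ℝ => f y) x‖ * (a * |x|) ≤ Mg * (a * |x|) :=
          mul_le_mul_of_nonneg_right (hMg' x) (by positivity)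
        nlinarith [abs_nonneg x, mul_nonneg hMg0 ha.le])
  have hT2int : Integrable T2 :=
    integrable_mul_bker a ha (le_refl ‖z‖) _ (f.continuous.mul (by fun_prop))
      (Mf * (a + a ^ 2 * ‖z‖ + a ^ 2)) 2
      (fun x => by
        rw [norm_mul]
        calc ‖f x‖ * ‖(a:ℂ) + (a:ℂ) * x * ((a:ℂ) * z - (a:ℂ) * x)‖
            ≤ Mf * ((a + a ^ 2 * ‖z‖ + a ^ 2) * (|x| + 1) ^ 2) :=
              mul_le_mul (hMf x) (norm_t2_le a ha z x) (norm_nonneg _) hMf0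
          _ = Mf * (a + a ^ 2 * ‖z‖ + a ^ 2) * (|x| + 1) ^ 2 := by ring)
  have hbnd : ∀ x, ‖h x‖ ≤ (Mf * a * Real.exp (a / 4 * ‖z‖ ^ 2)) *
      ((|x| + 1) ^ 1 * Real.exp (a * ‖z‖ * |x| - a / 2 * x ^ 2)) := by
    intro x
    have hx : h x = (f x * ((a:ℂ) * x)) * bker a x z := by
      simp only [hdef]; ring
    rw [hx]
    apply norm_mul_bker_le a ha.le (le_refl ‖z‖) x _ (Mf * a) 1
    rw [norm_mul, pow_one, norm_ax a ha]
    have h0 : ‖f x‖ * (a * |x|) ≤ Mf * (a * |x|) :=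
      mul_le_mul_of_nonneg_right (hMf x) (by positivity)
    nlinarith [abs_nonneg x, mul_nonneg hMf0 ha.le]
  obtain ⟨htop, hbot⟩ := tendsto_bound_zero a ha h _ _ 1 hbnd
  have hderint : MeasureTheory.Integrable (fun x => T1 x + T2 x) := hT1int.add hT2int
  have hIoi : ∫ x in Set.Ioi (0:ℝ), (T1 x + T2 x) = 0 - h 0 :=
    MeasureTheory.integral_Ioi_of_hasDerivAt_of_tendsto' (fun x _ => hh x)
      hderint.integrableOn htop
  have hIic : ∫ x in Set.Iic (0:ℝ), (T1 x + T2 x) = h 0 - 0 :=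
    MeasureTheory.integral_Iic_of_hasDerivAt_of_tendsto' (fun x _ => hh x)
      hderint.integrableOn hbot
  have hsum : ∫ x : ℝ, (T1 x + T2 x) = 0 := by
    rw [← intervalIntegral.integral_Iic_add_Ioi (b := (0:ℝ)) hderint.integrableOn
      hderint.integrableOn, hIoi, hIic]
    ring
  rw [MeasureTheory.integral_add hT1int hT2int] at hsum
  have hneg : ∫ x : ℝ, T1 x = - ∫ x : ℝ, T2 x := by linear_combination hsum
  calc ∫ x : ℝ, ((a:ℂ) * x * deriv (fun y : ℝ => f y) x) * bker a x z
      = ∫ x : ℝ, T1 x := by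
        congr 1
        funext x
        simp only [hT1]
        ring
    _ = - ∫ x : ℝ, T2 x := hneg
    _ = ∫ x : ℝ, -(T2 x) := (MeasureTheory.integral_neg _).symm
    _ = ∫ x : ℝ, (f x * ((a:ℂ) ^ 2 * x ^ 2 - (a:ℂ) ^ 2 * x * z - (a:ℂ))) * bker a x z := by
        congr 1
        funext x
        simp only [hT2]
        ring

end BargmannAux

/-- [B_{a/2}(a x f')](z) = (B f)''(z) - (a^2 z^2 / 4)(B f)(z) - (a/2)(B f)(z) for Schwartz f:
the Bargmann transform intertwines the real Euler operator with the complex harmonic oscillator. -/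
theorem bargmann_euler (a : ℝ) (ha : 0 < a) (f : SchwartzMap ℝ ℂ) (z : ℂ) :
    bargmann a (fun x : ℝ => (a : ℂ) * (x : ℂ) * deriv (fun y : ℝ => f y) x) z =
      iteratedDeriv 2 (bargmann a (fun x : ℝ => f x)) z
        - ((a : ℂ) ^ 2 * z ^ 2 / 4) * bargmann a (fun x : ℝ => f x) z
        - ((a : ℂ) / 2) * bargmann a (fun x : ℝ => f x) z := by
  obtain ⟨Mf, hMf0, hMf⟩ := schwartz_bound f
  set c : ℝ := (a / Real.pi) ^ ((1 : ℝ) / 4) with hc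
  have hB : bargmann a (fun x : ℝ => f x) = fun w => (c:ℂ) * ∫ x : ℝ, f x * bker a x w := rfl
  have hd1 : ∀ w : ℂ, HasDerivAt (bargmann a fun x : ℝ => f x)
      ((c:ℂ) * ∫ x : ℝ, (f x * ((a:ℂ) * x - (a:ℂ) / 2 * w)) * bker a x w) w := by
    intro w
    rw [hB]
    exact (hasDerivAt_bargmann_int a ha f w).const_mul _
  have hder1 : deriv (bargmann a fun x : ℝ => f x)
      = fun w => (c:ℂ) * ∫ x : ℝ, (f x * ((a:ℂ) * x - (a:ℂ) / 2 * w)) * bker a x w :=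
    funext fun w => (hd1 w).deriv
  have hd2 : HasDerivAt (deriv (bargmann a fun x : ℝ => f x))
      ((c:ℂ) * ∫ x : ℝ, (f x * (((a:ℂ) * x - (a:ℂ) / 2 * z) ^ 2 - (a:ℂ) / 2)) * bker a x z) z := by
    rw [hder1]
    exact (hasDerivAt_bargmann_int2 a ha f z).const_mul _
  have h2 : iteratedDeriv 2 (bargmann a fun x : ℝ => f x) z
      = (c:ℂ) * ∫ x : ℝ, (f x * (((a:ℂ) * x - (a:ℂ) / 2 * z) ^ 2 - (a:ℂ) / 2)) * bker a x z := by
    rw [iteratedDeriv_succ, iteratedDeriv_one]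
    exact hd2.deriv
  have hI1 : MeasureTheory.Integrable (fun x : ℝ => f x * bker a x z) :=
    integrable_mul_bker a ha (le_refl ‖z‖) _ f.continuous Mf 0 (fun x => by simpa using hMf x)
  have hIq : MeasureTheory.Integrable
      (fun x : ℝ => (f x * ((a:ℂ) ^ 2 * x ^ 2 - (a:ℂ) ^ 2 * x * z - (a:ℂ))) * bker a x z) :=
    integrable_mul_bker a ha (le_refl ‖z‖) _ (f.continuous.mul (by fun_prop))
      (Mf * (a ^ 2 + a ^ 2 * ‖z‖ + a)) 2
      (fun x => by
        rw [norm_mul]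
        calc ‖f x‖ * ‖(a:ℂ) ^ 2 * x ^ 2 - (a:ℂ) ^ 2 * x * z - (a:ℂ)‖
            ≤ Mf * ((a ^ 2 + a ^ 2 * ‖z‖ + a) * (|x| + 1) ^ 2) :=
              mul_le_mul (hMf x) (norm_quad_le a ha z x) (norm_nonneg _) hMf0
          _ = Mf * (a ^ 2 + a ^ 2 * ‖z‖ + a) * (|x| + 1) ^ 2 := by ring)
  have hH2 : (∫ x : ℝ, (f x * (((a:ℂ) * x - (a:ℂ) / 2 * z) ^ 2 - (a:ℂ) / 2)) * bker a x z)
      = (∫ x : ℝ, (f x * ((a:ℂ) ^ 2 * x ^ 2 - (a:ℂ) ^ 2 * x * z - (a:ℂ))) * bker a x z)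
        + ((a:ℂ) ^ 2 * z ^ 2 / 4 + (a:ℂ) / 2) * ∫ x : ℝ, f x * bker a x z := by
    have hadd := MeasureTheory.integral_add hIq
      (hI1.const_mul ((a:ℂ) ^ 2 * z ^ 2 / 4 + (a:ℂ) / 2))
    rw [MeasureTheory.integral_const_mul] at hadd
    rw [← hadd]
    congr 1
    funext x
    ring
  rw [h2, bargmann_eq_bker, bargmann_eq_bker, bargmann_ibp a ha f z, hH2]
  ring
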